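/- Let 0 < q < 1. On H = ℓ²(ℤ≥0)⊗ℓ²(ℤ≥0), the operators z₁₁ = e^{iφ} I⊗D² − q^{-1} S*C₄ ⊗ C₂SC₂S, z₂₁ = D²⊗C₂S, z₂₂ = C₄S⊗I (defining τ_φ) satisfy τ_φ(z₁₁)* Ω = e^{−iφ} Ω, τ_φ(z₂₁)* Ω = 0, and τ_φ(z₂₂)* Ω = 0, where Ω = e₀ ⊗ e₀. -/

import Mathlib

noncomputable section
open ContinuousLinearMap Complex

/-- ℓ²(ℤ≥0) ⊗ ℓ²(ℤ≥0), realized as ℓ²(ℤ≥0 × ℤ≥0) -/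
abbrev K : Type := lp (fun _ : ℕ × ℕ => ℂ) 2

/-- the orthonormal basis vector e_j ⊗ e_k -/
def E (j k : ℕ) : K := lp.single 2 (j, k) 1

open scoped InnerProductSpace in
lemma adj_coord (z : K →L[ℂ] K) (v : K) (j k : ℕ) :
    (adjoint z v) (j, k) = (starRingEnd ℂ) (⟪v, z (E j k)⟫_ℂ) := by
  have h1 : (adjoint z v) (j, k) = ⟪lp.single 2 (j, k) (1:ℂ), adjoint z v⟫_ℂ := by
    rw [lp.inner_single_left]
    simp [RCLike.inner_apply]
  rw [h1, ContinuousLinearMap.adjoint_inner_right, ← inner_conj_symm]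
  rfl

open scoped InnerProductSpace in
lemma inner_E (j k : ℕ) :
    ⟪E 0 0, E j k⟫_ℂ = if ((0, 0) : ℕ × ℕ) = (j, k) then 1 else 0 := by
  rw [E, E, lp.inner_single_left, RCLike.inner_apply]
  simp only [map_one, one_mul, lp.single_apply, Pi.single_apply]
  split_ifs with h _ _ <;> simp_all

/-- τ_φ(z₁₁) = e^{iφ} I⊗D² − q⁻¹ S*C₄ ⊗ C₂SC₂S, τ_φ(z₂₁) = D²⊗C₂S, τ_φ(z₂₂) = C₄S⊗I,
described by their action on the basis e_j ⊗ e_k; the coherent vector is Ω = e₀⊗e₀. -/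
theorem stmt11 (q : ℝ) (hq : 0 < q) (hq1 : q < 1) (φ : ℝ)
    (z11 z21 z22 : K →L[ℂ] K)
    (hz11 : ∀ j k : ℕ, z11 (E j k)
      = (Complex.exp (φ * Complex.I) * ((q ^ (2 * k) : ℝ) : ℂ)) • E j k
        - (((q⁻¹ * Real.sqrt (1 - q ^ (4 * j)) * Real.sqrt (1 - q ^ (2 * (k + 1)))
            * Real.sqrt (1 - q ^ (2 * (k + 2)))) : ℝ) : ℂ) • E (j - 1) (k + 2))
    (hz21 : ∀ j k : ℕ, z21 (E j k)
      = (((q ^ (2 * j) * Real.sqrt (1 - q ^ (2 * (k + 1)))) : ℝ) : ℂ) • E j (k + 1))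
    (hz22 : ∀ j k : ℕ, z22 (E j k)
      = ((Real.sqrt (1 - q ^ (4 * (j + 1))) : ℝ) : ℂ) • E (j + 1) k) :
    adjoint z11 (E 0 0) = Complex.exp (-(φ * Complex.I)) • E 0 0
    ∧ adjoint z21 (E 0 0) = 0
    ∧ adjoint z22 (E 0 0) = 0 := by
  refine ⟨?_, ?_, ?_⟩
  · refine lp.ext (funext fun p => ?_)
    obtain ⟨j, k⟩ := p
    rw [adj_coord, hz11, inner_sub_right, inner_smul_right, inner_smul_right,
      inner_E, inner_E]
    have h2 : ((0, 0) : ℕ × ℕ) ≠ (j - 1, k + 2) := by simp [Prod.ext_iff]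
    rw [if_neg h2]
    simp only [if_false, mul_zero, sub_zero, lp.coeFn_smul, Pi.smul_apply, E,
      lp.single_apply, smul_eq_mul]
    by_cases h : ((0, 0) : ℕ × ℕ) = (j, k)
    · obtain ⟨rfl, rfl⟩ : 0 = j ∧ 0 = k := by simpa [Prod.ext_iff] using h
      rw [if_pos rfl, Pi.single_eq_same]
      simp [map_mul, ← Complex.exp_conj, Complex.conj_ofReal, mul_comm]
    · rw [if_neg h, Pi.single_apply, if_neg (fun hh => h hh.symm)]
      simp
  · refine lp.ext (funext fun p => ?_)
    obtain ⟨j, k⟩ := p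
    rw [adj_coord, hz21, inner_smul_right, inner_E]
    have h2 : ((0, 0) : ℕ × ℕ) ≠ (j, k + 1) := by simp [Prod.ext_iff]
    rw [if_neg h2]
    simp
  · refine lp.ext (funext fun p => ?_)
    obtain ⟨j, k⟩ := p
    rw [adj_coord, hz22, inner_smul_right, inner_E]
    have h2 : ((0, 0) : ℕ × ℕ) ≠ (j + 1, k) := by simp [Prod.ext_iff]
    rw [if_neg h2]
    simp
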